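/- Let S_A be a simplex with affinely independent vertex set {p_i : i ∈ A} in ℝ^{|A|-1}, and for small λ > 0 let S_A^λ be the shrunken homothetic copy with vertices p_i^λ on the segments toward the centroid. For j ∈ A, let S'_{A\{j}} be the face of the truncated polytope T(A,λ,j) parallel to the facet S_{A\{j}} (as constructed via the points p(i,A,j) = [p_i, p_j] ∩ H_{A\{j}}, where H_{A\{j}} is the affine hull of {p_i^λ : i ∈ A, i ≠ j}). Then for each i ∈ A and j ∈ A with j ≠ i: U(A,λ,i) ∩ S'_{A\{j}} = {p(i,A,j)}, where U(A,λ,i) = conv({p_i} ∪ {p(i,A,k) : k ∈ A, k ≠ i}). -/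

import Mathlib

set_option maxHeartbeats 1000000


/-- Let `{p i : i ∈ A}` be the affinely independent vertex set of a simplex `S_A` in
`ℝ^{|A|-1}`, let `S_A^λ` be the shrunken homothetic copy with vertices `pl i` on the
segments toward the centroid, and for distinct `i, j` let `q i j = p(i,A,j)` be the point
of `[p i, p j]` lying on the affine hull `H_{A\{j}}` of `{pl k : k ≠ j}`. Then for all
`i ≠ j`, `U(A,λ,i) ∩ S'_{A\{j}} = {q i j}`, where
`U(A,λ,i) = conv({p i} ∪ {q i k : k ≠ i})` and `S'_{A\{j}} = conv{q i' j : i' ≠ j}`. -/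
theorem U_inter_face_eq_singleton {m : ℕ} {ι : Type*} [Fintype ι] [DecidableEq ι]
    (hcard : Fintype.card ι = m + 1)
    (p : ι → EuclideanSpace ℝ (Fin m)) (hp : AffineIndependent ℝ p)
    (r : ℝ) (hr : r ∈ Set.Ioo (0 : ℝ) 1)
    (pl : ι → EuclideanSpace ℝ (Fin m))
    (hpl : ∀ i, pl i = AffineMap.homothety (Finset.univ.centroid ℝ p) r (p i))
    (q : ι → ι → EuclideanSpace ℝ (Fin m))
    (hq : ∀ i j, i ≠ j → q i j ∈ segment ℝ (p i) (p j) ∧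
      q i j ∈ (affineSpan ℝ (pl '' {k | k ≠ j}) : Set (EuclideanSpace ℝ (Fin m))))
    (i j : ι) (hij : i ≠ j) :
    convexHull ℝ ({p i} ∪ {x | ∃ k, k ≠ i ∧ x = q i k}) ∩
      convexHull ℝ {x | ∃ i', i' ≠ j ∧ x = q i' j} = {q i j} := by
  classical
  have hni : Nonempty ι := Fintype.card_pos_iff.mp (by omega)
  have hne : (Finset.univ : Finset ι).Nonempty := Finset.univ_nonempty
  have htop : affineSpan ℝ (Set.range p) = ⊤ := by
    rw [hp.affineSpan_eq_top_iff_card_eq_finrank_add_one, hcard, finrank_euclideanSpace_fin]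
  let b : AffineBasis ι ℝ (EuclideanSpace ℝ (Fin m)) := ⟨p, hp, htop⟩
  set t : ℝ := (1 - r) / (m + 1) with ht
  have hm1 : (0 : ℝ) < (m : ℝ) + 1 := by positivity
  have ht0 : 0 < t := div_pos (by linarith [hr.2]) hm1
  have ht1 : t < 1 := by
    rw [ht, div_lt_one hm1]
    nlinarith [hr.1, Nat.cast_nonneg (α := ℝ) m]
  have hbp : ⇑b = p := rfl
  have hcoordp : ∀ k l : ι, b.coord k (p l) = if k = l then 1 else 0 := fun k l =>
    b.coord_apply k l
  have hcen : ∀ k : ι, b.coord k (Finset.univ.centroid ℝ p) = ((m : ℝ) + 1)⁻¹ := by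
    intro k
    have hw : ∑ l, Finset.univ.centroidWeights ℝ l = 1 :=
      Finset.sum_centroidWeights_eq_one_of_nonempty ℝ _ hne
    have h := b.coord_apply_combination_of_mem (Finset.mem_univ k) hw
    rw [Finset.centroid_def, ← hbp, h, Finset.centroidWeights_apply, Finset.card_univ, hcard]
    push_cast
    ring
  -- the explicit form of q
  have hqeq : ∀ a c : ι, a ≠ c → q a c = AffineMap.lineMap (p a) (p c) t := by
    intro a c hac
    obtain ⟨hseg, hspan⟩ := hq a c hac
    rw [segment_eq_image_lineMap] at hseg
    obtain ⟨s, _, hqs⟩ := hseg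
    have hc : b.coord c (q a c) = t := by
      have hsub : affineSpan ℝ (pl '' {k | k ≠ c}) ≤
          AffineSubspace.comap (b.coord c) (affineSpan ℝ ({t} : Set ℝ)) := by
        rw [affineSpan_le]
        rintro x ⟨k, hk, rfl⟩
        show b.coord c (pl k) ∈ affineSpan ℝ ({t} : Set ℝ)
        rw [AffineSubspace.mem_affineSpan_singleton, hpl k, AffineMap.homothety_eq_lineMap,
          AffineMap.apply_lineMap, hcen, hcoordp, if_neg (Ne.symm hk),
          AffineMap.lineMap_apply_module, smul_eq_mul, smul_eq_mul, mul_zero, add_zero, ht,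
          div_eq_mul_inv]
      have hmem := hsub hspan
      simp only [AffineSubspace.mem_comap, AffineSubspace.coe_comap, Set.mem_preimage,
        SetLike.mem_coe, AffineSubspace.mem_affineSpan_singleton] at hmem
      exact hmem
    rw [← hqs, AffineMap.apply_lineMap, hcoordp, hcoordp, if_neg (Ne.symm hac), if_pos rfl,
      AffineMap.lineMap_apply_module] at hc
    have hst : s = t := by simpa using hc
    rw [← hqs, hst]
  -- coordinate values of the q's
  have gq1 : ∀ k, k ≠ i → b.coord i (q i k) = 1 - t := by
    intro k hk
    rw [hqeq i k (Ne.symm hk), AffineMap.apply_lineMap, hcoordp, hcoordp, if_pos rfl,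
      if_neg (Ne.symm hk), AffineMap.lineMap_apply_module, smul_eq_mul, smul_eq_mul]
    ring
  have gq2 : ∀ i', i' ≠ j → i' ≠ i → b.coord i (q i' j) = 0 := by
    intro i' hi'j hi'i
    rw [hqeq i' j hi'j, AffineMap.apply_lineMap, hcoordp, hcoordp, if_neg (Ne.symm hi'i),
      if_neg hij, AffineMap.lineMap_apply_module, smul_eq_mul, smul_eq_mul]
    ring
  -- on U, coord i ≥ 1 - t
  have hU : ∀ x ∈ convexHull ℝ ({p i} ∪ {x | ∃ k, k ≠ i ∧ x = q i k}),
      1 - t ≤ b.coord i x := by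
    intro x hx
    have hconv : Convex ℝ {y : EuclideanSpace ℝ (Fin m) | 1 - t ≤ b.coord i y} := by
      have hEq : {y : EuclideanSpace ℝ (Fin m) | 1 - t ≤ b.coord i y} =
          (b.coord i) ⁻¹' Set.Ici (1 - t) := rfl
      rw [hEq]
      exact (convex_Ici _).affine_preimage _
    refine convexHull_min ?_ hconv hx
    rintro y (rfl | ⟨k, hk, rfl⟩)
    · show 1 - t ≤ b.coord i (p i)
      rw [hcoordp, if_pos rfl]
      linarith
    · show 1 - t ≤ b.coord i (q i k)
      rw [gq1 k hk]
  -- on the face, coord i ≥ 1 - t forces x = q i j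
  have hF : ∀ x ∈ convexHull ℝ {x | ∃ i', i' ≠ j ∧ x = q i' j},
      1 - t ≤ b.coord i x → x = q i j := by
    intro x hx hxi
    rw [convexHull_eq] at hx
    obtain ⟨κ, s, w, z, hw0, hw1, hz, hcm⟩ := hx
    have hx' : x = ∑ a ∈ s, w a • z a := by
      rw [← hcm, Finset.centerMass, hw1, inv_one, one_smul]
    have hgz : ∀ a ∈ s, b.coord i (z a) ≤ 1 - t := by
      intro a ha
      obtain ⟨i', hi', hzi⟩ := hz a ha
      by_cases h : i' = i
      · subst h
        rw [hzi, gq1 j (Ne.symm hij)]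
      · rw [hzi, gq2 i' hi' h]
        linarith
    have hgx : b.coord i x = ∑ a ∈ s, w a * b.coord i (z a) := by
      rw [hx', ← Finset.affineCombination_eq_linear_combination s z w hw1,
        Finset.map_affineCombination s z w hw1,
        Finset.affineCombination_eq_linear_combination _ _ w hw1]
      simp [smul_eq_mul]
    have hsum0 : ∑ a ∈ s, w a * ((1 - t) - b.coord i (z a)) = 0 := by
      have hle : ∑ a ∈ s, w a * ((1 - t) - b.coord i (z a)) ≤ 0 := by
        have h1 : ∑ a ∈ s, w a * ((1 - t) - b.coord i (z a)) =
            (1 - t) - b.coord i x := by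
          calc ∑ a ∈ s, w a * ((1 - t) - b.coord i (z a))
              = ∑ a ∈ s, (w a * (1 - t) - w a * b.coord i (z a)) :=
                Finset.sum_congr rfl fun a _ => by ring
            _ = (∑ a ∈ s, w a) * (1 - t) - ∑ a ∈ s, w a * b.coord i (z a) := by
                rw [Finset.sum_sub_distrib, Finset.sum_mul]
            _ = (1 - t) - b.coord i x := by rw [hw1, one_mul, hgx]
        rw [h1]
        linarith
      have hge : 0 ≤ ∑ a ∈ s, w a * ((1 - t) - b.coord i (z a)) :=
        Finset.sum_nonneg fun a ha =>
          mul_nonneg (hw0 a ha) (by linarith [hgz a ha])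
      linarith
    have hterm : ∀ a ∈ s, w a * ((1 - t) - b.coord i (z a)) = 0 :=
      (Finset.sum_eq_zero_iff_of_nonneg fun a ha =>
        mul_nonneg (hw0 a ha) (by linarith [hgz a ha])).1 hsum0
    have hrepl : ∀ a ∈ s, w a • z a = w a • q i j := by
      intro a ha
      rcases eq_or_lt_of_le (hw0 a ha) with h0 | hpos
      · rw [← h0, zero_smul, zero_smul]
      · have hz0 : (1 - t) - b.coord i (z a) = 0 := by
          rcases mul_eq_zero.1 (hterm a ha) with h | h
          · exact absurd h (ne_of_gt hpos)
          · exact h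
        obtain ⟨i', hi', hzi⟩ := hz a ha
        by_cases h : i' = i
        · subst h
          rw [hzi]
        · rw [hzi, gq2 i' hi' h] at hz0
          linarith
      
    have : x = q i j := by
      rw [hx', Finset.sum_congr rfl hrepl, ← Finset.sum_smul, hw1, one_smul]
    exact this
  -- q i j belongs to both hulls
  have hmem1 : q i j ∈ convexHull ℝ ({p i} ∪ {x | ∃ k, k ≠ i ∧ x = q i k}) :=
    subset_convexHull ℝ _ (Or.inr ⟨j, Ne.symm hij, rfl⟩)
  have hmem2 : q i j ∈ convexHull ℝ {x | ∃ i', i' ≠ j ∧ x = q i' j} :=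
    subset_convexHull ℝ _ ⟨i, hij, rfl⟩
  apply Set.Subset.antisymm
  · rintro x ⟨hx1, hx2⟩
    exact hF x hx2 (hU x hx1)
  · rintro x hx
    rw [Set.mem_singleton_iff] at hx
    subst hx
    exact ⟨hmem1, hmem2⟩
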